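/- For all positive reals α, β, γ, δ and every point x ∈ ℝ, one has min(α/γ, β/δ) ≤ h'_{α,β}(x)/h'_{γ,δ}(x) ≤ max(α/γ, β/δ), where h' denotes the derivative. -/

import Mathlib

open Set

/-- The map `h_{α,β} : ℝ → ℝ` : `x ↦ αx` for `x < -1`,
`x ↦ ((β-α)/4)x² + ((β+α)/2)x + (β-α)/4` for `x ∈ [-1,1]`, and `x ↦ βx` for `x > 1`. -/
noncomputable def hab (a b : ℝ) (x : ℝ) : ℝ :=
  if x < -1 then a * x
  else if x ≤ 1 then (b - a) / 4 * x ^ 2 + (b + a) / 2 * x + (b - a) / 4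
  else b * x

noncomputable def habd (a b : ℝ) (x : ℝ) : ℝ :=
  if x ≤ -1 then a else if x ≤ 1 then (b - a) / 2 * x + (b + a) / 2 else b

lemma q_hasDerivAt (a b x : ℝ) :
    HasDerivAt (fun y : ℝ => (b - a) / 4 * y ^ 2 + (b + a) / 2 * y + (b - a) / 4)
      ((b - a) / 2 * x + (b + a) / 2) x := by
  have h := (((hasDerivAt_pow 2 x).const_mul ((b - a) / 4)).add
      ((hasDerivAt_id x).const_mul ((b + a) / 2))).add_const ((b - a) / 4)
  convert h using 1
  all_goals first | rfl | (simp; ring)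

lemma eqOn_left (a b : ℝ) : ∀ y ∈ Iic (-1 : ℝ), hab a b y = a * y := by
  intro y hy
  rcases lt_or_eq_of_le (mem_Iic.mp hy) with h | h
  · simp [hab, h]
  · subst h; norm_num [hab]; ring

lemma eqOn_mid (a b : ℝ) : ∀ y ∈ Icc (-1 : ℝ) 1,
    hab a b y = (b - a) / 4 * y ^ 2 + (b + a) / 2 * y + (b - a) / 4 := by
  intro y hy
  simp [hab, not_lt.mpr hy.1, hy.2]

lemma eqOn_right (a b : ℝ) : ∀ y ∈ Ici (1 : ℝ), hab a b y = b * y := by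
  intro y hy
  rcases lt_or_eq_of_le (mem_Ici.mp hy) with h | h
  · have h1 : ¬ y < -1 := by linarith
    have h2 : ¬ y ≤ 1 := not_le.mpr h
    simp [hab, h1, h2]
  · subst h; norm_num [hab]; ring

lemma hab_hasDerivAt (a b x : ℝ) : HasDerivAt (hab a b) (habd a b x) x := by
  rcases lt_trichotomy x (-1) with hx | hx | hx
  · have h : HasDerivAt (fun y : ℝ => a * y) (a * 1) x := (hasDerivAt_id x).const_mul a
    have he : hab a b =ᶠ[nhds x] (fun y : ℝ => a * y) :=
      Filter.eventuallyEq_of_mem (Iio_mem_nhds hx) (fun y hy => eqOn_left a b y (mem_Iic.mpr (le_of_lt hy)))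
    simpa [habd, hx.le] using h.congr_of_eventuallyEq he
  · subst hx
    have h1 : HasDerivWithinAt (hab a b) a (Iic (-1 : ℝ)) (-1) := by
      have h : HasDerivAt (fun y : ℝ => a * y) (a * 1) (-1) := (hasDerivAt_id _).const_mul a
      have := (h.hasDerivWithinAt (s := Iic (-1 : ℝ))).congr (eqOn_left a b)
        (eqOn_left a b (-1) (mem_Iic.mpr le_rfl))
      simpa using this
    have h2 : HasDerivWithinAt (hab a b) a (Ici (-1 : ℝ)) (-1) := by
      have h := (q_hasDerivAt a b (-1)).hasDerivWithinAt (s := Icc (-1 : ℝ) 1)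
      have h' := h.congr (eqOn_mid a b) (eqOn_mid a b (-1) (by norm_num))
      have hmem : Icc (-1 : ℝ) 1 ∈ nhdsWithin (-1 : ℝ) (Ici (-1 : ℝ)) :=
        Icc_mem_nhdsGE (by norm_num)
      have h'' := h'.mono_of_mem_nhdsWithin hmem
      convert h'' using 1
      all_goals first | rfl | ring
    have h3 := h1.union h2
    rw [Iic_union_Ici, hasDerivWithinAt_univ] at h3
    simpa [habd] using h3
  · rcases lt_trichotomy x 1 with hx1 | hx1 | hx1
    · have he : hab a b =ᶠ[nhds x] (fun y : ℝ => (b - a) / 4 * y ^ 2 + (b + a) / 2 * y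
          + (b - a) / 4) :=
        Filter.eventuallyEq_of_mem (Ioo_mem_nhds hx hx1)
          (fun y hy => eqOn_mid a b y ⟨hy.1.le, hy.2.le⟩)
      have h := (q_hasDerivAt a b x).congr_of_eventuallyEq he
      have hn : ¬ x ≤ -1 := not_le.mpr hx
      simpa [habd, hn, hx1.le] using h
    · subst hx1
      have h1 : HasDerivWithinAt (hab a b) b (Iic (1 : ℝ)) 1 := by
        have h := (q_hasDerivAt a b 1).hasDerivWithinAt (s := Icc (-1 : ℝ) 1)
        have h' := h.congr (eqOn_mid a b) (eqOn_mid a b 1 (by norm_num))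
        have hmem : Icc (-1 : ℝ) 1 ∈ nhdsWithin (1 : ℝ) (Iic (1 : ℝ)) :=
          Icc_mem_nhdsLE (by norm_num)
        have h'' := h'.mono_of_mem_nhdsWithin hmem
        convert h'' using 1
        all_goals first | rfl | ring
      have h2 : HasDerivWithinAt (hab a b) b (Ici (1 : ℝ)) 1 := by
        have h : HasDerivAt (fun y : ℝ => b * y) (b * 1) 1 := (hasDerivAt_id _).const_mul b
        have := (h.hasDerivWithinAt (s := Ici (1 : ℝ))).congr (eqOn_right a b)
          (eqOn_right a b 1 (mem_Ici.mpr le_rfl))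
        simpa using this
      have h3 := h1.union h2
      rw [Iic_union_Ici, hasDerivWithinAt_univ] at h3
      have hn : ¬ (1 : ℝ) ≤ -1 := by norm_num
      have : habd a b 1 = b := by
        norm_num [habd]
        ring
      rw [this]
      exact h3
    · have h : HasDerivAt (fun y : ℝ => b * y) (b * 1) x := (hasDerivAt_id x).const_mul b
      have he : hab a b =ᶠ[nhds x] (fun y : ℝ => b * y) :=
        Filter.eventuallyEq_of_mem (Ioi_mem_nhds hx1) (fun y hy => eqOn_right a b y (mem_Ici.mpr (le_of_lt hy)))
      have hn1 : ¬ x ≤ -1 := by push_neg; linarith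
      have hn2 : ¬ x ≤ 1 := not_le.mpr hx1
      simpa [habd, hn1, hn2] using h.congr_of_eventuallyEq he


/-- **Lemma.** For all positive reals `α, β, γ, δ` and every `x ∈ ℝ`,
`min (α/γ) (β/δ) ≤ h'_{α,β}(x) / h'_{γ,δ}(x) ≤ max (α/γ) (β/δ)`. -/
theorem hab_deriv_ratio (a b c d : ℝ) (ha : 0 < a) (hb : 0 < b) (hc : 0 < c) (hd : 0 < d)
    (x : ℝ) :
    min (a / c) (b / d) ≤ deriv (hab a b) x / deriv (hab c d) x ∧
      deriv (hab a b) x / deriv (hab c d) x ≤ max (a / c) (b / d) := by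
  rw [(hab_hasDerivAt a b x).deriv, (hab_hasDerivAt c d x).deriv]
  unfold habd
  split_ifs with h1 h2
  · exact ⟨min_le_left _ _, le_max_left _ _⟩
  · push_neg at h1
    have hs : (0 : ℝ) ≤ 1 - x := by linarith
    have ht : (0 : ℝ) < 1 + x := by linarith
    have hDpos : 0 < (d - c) / 2 * x + (d + c) / 2 := by
      nlinarith [mul_pos hd ht, mul_nonneg hc.le hs]
    have hma : min (a / c) (b / d) * c ≤ a :=
      (le_div_iff₀ hc).mp (min_le_left (a / c) (b / d))
    have hmb : min (a / c) (b / d) * d ≤ b :=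
      (le_div_iff₀ hd).mp (min_le_right (a / c) (b / d))
    have hMa : a ≤ max (a / c) (b / d) * c :=
      (div_le_iff₀ hc).mp (le_max_left (a / c) (b / d))
    have hMb : b ≤ max (a / c) (b / d) * d :=
      (div_le_iff₀ hd).mp (le_max_right (a / c) (b / d))
    constructor
    · rw [le_div_iff₀ hDpos]
      nlinarith [mul_le_mul_of_nonneg_right hma hs, mul_le_mul_of_nonneg_right hmb ht.le]
    · rw [div_le_iff₀ hDpos]
      nlinarith [mul_le_mul_of_nonneg_right hMa hs, mul_le_mul_of_nonneg_right hMb ht.le]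
  · exact ⟨min_le_right _ _, le_max_right _ _⟩
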